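/- Let M and M̃ be nonnegative F×S real matrices with F, S finite, let k := rank(M̃ − M) and ε := ‖M̃ − M‖_∞ (the maximum absolute value of an entry of M̃ − M). If M̃ admits a size-d SDP factorization, then the matrix M + kε·J, where J is the F×S all-ones matrix, admits a size-(d + 2k) SDP factorization. In particular, rank_SDP(M + kε·J) ≤ rank_SDP(M̃) + 2·rank(M̃ − M). -/

import Mathlib

open Matrix

/-- A size-`d` SDP factorization of a nonnegative matrix `M : F × S → ℝ` consists of
`d × d` real psd matrices `T_f` (`f ∈ F`) and `U_s` (`s ∈ S`) together with a
nonnegative vector `μ : F → ℝ` such that `M(f,s) = tr(T_f U_s) + μ(f)`. -/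
def IsSDPFactorization {F S : Type*} (M : F → S → ℝ) (d : ℕ) : Prop :=
  ∃ (T : F → Matrix (Fin d) (Fin d) ℝ) (U : S → Matrix (Fin d) (Fin d) ℝ) (μ : F → ℝ),
    (∀ f, (T f).PosSemidef) ∧ (∀ s, (U s).PosSemidef) ∧ (∀ f, 0 ≤ μ f) ∧
    ∀ f s, M f s = (T f * U s).trace + μ f

/-- The SDP rank of `M`: the minimal size of an SDP factorization. -/
noncomputable def sdpRank {F S : Type*} (M : F → S → ℝ) : ℕ :=
  sInf {d | IsSDPFactorization M d}

section Aux

open Submodule Set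

/-- Extract `k` linearly independent columns from a matrix of rank `k`. -/
lemma exists_linearIndependent_cols {F S : Type*} [Fintype F] [Fintype S]
    (B : Matrix F S ℝ) (k : ℕ) (hB : B.rank = k) :
    ∃ c : Fin k → S, LinearIndependent ℝ (fun j => Bᵀ (c j)) := by
  classical
  obtain ⟨t, hts, htsp, hti⟩ := exists_linearIndependent ℝ (Set.range Bᵀ)
  have htfin : t.Finite := hti.setFinite
  haveI := htfin.fintype
  have hcard : Fintype.card t = k := by
    have h1 : Module.finrank ℝ (span ℝ t) = t.toFinset.card :=
      finrank_span_set_eq_card hti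
    rw [htsp] at h1
    rw [← Set.toFinset_card, ← h1, ← hB, rank_eq_finrank_span_cols]; rfl
  let e : Fin k ≃ t := (Fintype.equivFinOfCardEq hcard).symm
  have hchoice : ∀ i : Fin k, ∃ s : S, Bᵀ s = ((e i : t) : F → ℝ) := fun i => hts (e i).2
  choose c hc using hchoice
  have : (fun j => Bᵀ (c j)) = (fun (x : t) => (x : F → ℝ)) ∘ e := by
    funext j; simp [hc]
  exact ⟨c, this ▸ hti.comp e e.injective⟩

/-- A rank-`k` matrix with entries bounded by `ε` admits a rank factorization
`E = a * b` where the entries of `a` are bounded by `1` and those of `b` by `ε`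
(via a maximum-volume `k × k` submatrix and Cramer's rule). -/
lemma exists_bounded_decomp {F S : Type*} [Fintype F] [Fintype S]
    (E : Matrix F S ℝ) (k : ℕ) (hk : E.rank = k) (ε : ℝ)
    (hE : ∀ f s, |E f s| ≤ ε) :
    ∃ (a : F → Fin k → ℝ) (b : Fin k → S → ℝ),
      (∀ f i, |a f i| ≤ 1) ∧ (∀ i s, |b i s| ≤ ε) ∧
      ∀ f s, E f s = ∑ i, a f i * b i s := by
  classical
  -- find k rows that are linearly independent
  have hkT : Eᵀ.rank = k := by rw [rank_transpose]; exact hk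
  obtain ⟨r, hr⟩ := exists_linearIndependent_cols Eᵀ k hkT
  simp only [transpose_transpose] at hr
  -- find k columns making an invertible submatrix
  have hsub : (E.submatrix r id).rank = k := by
    have h2 : LinearIndependent ℝ (E.submatrix r id) := hr
    simpa using LinearIndependent.rank_matrix (M := E.submatrix r id) h2
  obtain ⟨c, hc⟩ := exists_linearIndependent_cols (E.submatrix r id) k hsub
  have hdet : (E.submatrix r c).det ≠ 0 := by
    have h3 : LinearIndependent ℝ (fun j => (E.submatrix r c)ᵀ j) := hc
    have := (linearIndependent_cols_iff_isUnit).mp h3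
    rw [Matrix.isUnit_iff_isUnit_det] at this
    exact this.ne_zero
  -- maximize the absolute value of the determinant
  obtain ⟨p, -, hp⟩ := Finset.exists_max_image (Finset.univ : Finset ((Fin k → F) × (Fin k → S)))
      (fun p => |(E.submatrix p.1 p.2).det|) ⟨(r, c), Finset.mem_univ _⟩
  obtain ⟨r₀, c₀⟩ := p
  have hmax : ∀ r' c', |(E.submatrix r' c').det| ≤ |(E.submatrix r₀ c₀).det| :=
    fun r' c' => hp (r', c') (Finset.mem_univ _)
  have hdet₀ : (E.submatrix r₀ c₀).det ≠ 0 := by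
    intro h0
    have h1 := hmax r c
    rw [h0, abs_zero] at h1
    exact hdet (abs_eq_zero.mp (le_antisymm h1 (abs_nonneg _)))
  -- rows r₀ of E are linearly independent
  have hrows₀ : LinearIndependent ℝ (fun i => E (r₀ i)) := by
    have hsubrows : LinearIndependent ℝ (fun i => (E.submatrix r₀ c₀) i) :=
      linearIndependent_rows_iff_isUnit.mpr
        ((Matrix.isUnit_iff_isUnit_det _).mpr (isUnit_iff_ne_zero.mpr hdet₀))
    rw [Fintype.linearIndependent_iff] at hsubrows ⊢
    intro g hg
    refine hsubrows g ?_
    funext j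
    have := congrFun hg (c₀ j)
    simpa [Finset.sum_apply] using this
  -- they span the row space
  have hspan : ∀ f, E f ∈ span ℝ (Set.range fun i => E (r₀ i)) := by
    have h1 : span ℝ (Set.range fun i => E (r₀ i)) ≤ span ℝ (Set.range E) := by
      apply span_mono
      rintro _ ⟨i, rfl⟩
      exact ⟨r₀ i, rfl⟩
    have h2 : Module.finrank ℝ (span ℝ (Set.range fun i => E (r₀ i))) = k := by
      simpa using finrank_span_eq_card hrows₀
    have h3 : Module.finrank ℝ (span ℝ (Set.range E)) = k := by
      rw [← hk, rank_eq_finrank_span_row]; rfl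
    have h4 := Submodule.eq_of_le_of_finrank_le h1 (by rw [h2, h3])
    intro f
    rw [h4]
    exact subset_span (Set.mem_range_self f)
  have hex : ∀ f, ∃ x : Fin k → ℝ, ∑ i, x i • E (r₀ i) = E f := fun f =>
    (mem_span_range_iff_exists_fun ℝ).mp (hspan f)
  choose a ha using hex
  have hdecomp : ∀ f s, E f s = ∑ i, a f i * E (r₀ i) s := by
    intro f s
    have := congrFun (ha f) s
    simpa [Finset.sum_apply, eq_comm] using this.symm
  refine ⟨a, fun i => E (r₀ i), ?_, fun i s => hE _ _, hdecomp⟩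
  -- Cramer bound
  intro f i
  set D : Matrix (Fin k) (Fin k) ℝ := E.submatrix r₀ c₀ with hD
  set v : Fin k → ℝ := fun j => E f (c₀ j) with hv
  have hDx : Dᵀ *ᵥ (a f) = v := by
    funext j
    simp only [Matrix.mulVec, dotProduct, transpose_apply, hD, submatrix_apply, hv]
    rw [Finset.sum_congr rfl (fun i _ => mul_comm _ _)]
    exact (hdecomp f (c₀ j)).symm
  have hcr : Dᵀ.det • a f = Matrix.cramer Dᵀ v := by
    rw [← hDx, cramer_eq_adjugate_mulVec, mulVec_mulVec, adjugate_mul,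
      Matrix.smul_mulVec, one_mulVec]
  have hupd : D.updateRow i v = E.submatrix (Function.update r₀ i f) c₀ := by
    funext i' j
    rcases eq_or_ne i' i with rfl | h
    · simp [Matrix.updateRow_apply, hv]
    · simp [Matrix.updateRow_apply, h, Function.update_apply, hD]
  have h1 : Dᵀ.det * a f i = (E.submatrix (Function.update r₀ i f) c₀).det := by
    have := congrFun hcr i
    simp only [Pi.smul_apply, smul_eq_mul] at this
    rw [this, Matrix.cramer_apply, Matrix.updateCol_transpose, Matrix.det_transpose, hupd]
  have h2 : |Dᵀ.det| * |a f i| ≤ |Dᵀ.det| * 1 := by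
    rw [← abs_mul, h1, mul_one, Matrix.det_transpose]
    exact hmax _ _
  have hdpos : 0 < |Dᵀ.det| := abs_pos.mpr (by rw [Matrix.det_transpose]; exact hdet₀)
  exact le_of_mul_le_mul_left h2 hdpos

/-- A block-diagonal matrix with psd blocks is psd. -/
lemma posSemidef_fromBlocks_diag {m n : Type*} [Fintype m] [Fintype n]
    {A : Matrix m m ℝ} {D : Matrix n n ℝ} (hA : A.PosSemidef) (hD : D.PosSemidef) :
    (fromBlocks A 0 0 D).PosSemidef := by
  rw [posSemidef_iff_dotProduct_mulVec]
  constructor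
  · simp only [IsHermitian, fromBlocks_conjTranspose, conjTranspose_zero, hA.1.eq, hD.1.eq]
  · intro x
    have hx : x = Sum.elim (x ∘ Sum.inl) (x ∘ Sum.inr) := (Sum.elim_comp_inl_inr x).symm
    rw [hx, fromBlocks_mulVec]
    simp only [Matrix.zero_mulVec, add_zero, zero_add, Function.star_sumElim,
      sumElim_dotProduct_sumElim, Sum.elim_comp_inl, Sum.elim_comp_inr]
    exact add_nonneg ((posSemidef_iff_dotProduct_mulVec.mp hA).2 _)
        ((posSemidef_iff_dotProduct_mulVec.mp hD).2 _)

/-- Augmenting an SDP factorization of `N` by `2k` extra dimensions realizing the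
correction terms `ε - a f i * b i s`. -/
lemma isSDPFactorization_add_correction {F S : Type*} [Fintype F] [Fintype S]
    (N : F → S → ℝ) (d k : ℕ) (ε : ℝ)
    (a : F → Fin k → ℝ) (b : Fin k → S → ℝ)
    (ha : ∀ f i, |a f i| ≤ 1) (hb : ∀ i s, |b i s| ≤ ε)
    (hfact : IsSDPFactorization N d) :
    IsSDPFactorization (fun f s => N f s + ∑ i, (ε - a f i * b i s)) (d + 2 * k) := by
  classical
  obtain ⟨T, U, μ, hT, hU, hμ, hTU⟩ := hfact
  let e : (Fin d ⊕ (Fin k × Fin 2)) ≃ Fin (d + 2 * k) :=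
    ((Equiv.refl (Fin d)).sumCongr finProdFinEquiv).trans
      (finSumFinEquiv.trans (finCongr (by ring)))
  let pd : F → (Fin k × Fin 2) → ℝ :=
    fun f p => if p.2 = 0 then 1 + a f p.1 else 1 - a f p.1
  let qd : S → (Fin k × Fin 2) → ℝ :=
    fun s p => if p.2 = 0 then (ε - b p.1 s) / 2 else (ε + b p.1 s) / 2
  have hpd : ∀ f p, 0 ≤ pd f p := by
    intro f p
    obtain ⟨h1, h2⟩ := abs_le.mp (ha f p.1)
    by_cases h : p.2 = 0 <;> simp [pd, h] <;> linarith
  have hqd : ∀ s p, 0 ≤ qd s p := by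
    intro s p
    obtain ⟨h1, h2⟩ := abs_le.mp (hb p.1 s)
    by_cases h : p.2 = 0 <;> simp [qd, h] <;> linarith
  let T' : F → Matrix (Fin d ⊕ (Fin k × Fin 2)) (Fin d ⊕ (Fin k × Fin 2)) ℝ :=
    fun f => fromBlocks (T f) 0 0 (diagonal (pd f))
  let U' : S → Matrix (Fin d ⊕ (Fin k × Fin 2)) (Fin d ⊕ (Fin k × Fin 2)) ℝ :=
    fun s => fromBlocks (U s) 0 0 (diagonal (qd s))
  have hT' : ∀ f, (T' f).PosSemidef :=
    fun f => posSemidef_fromBlocks_diag (hT f) (PosSemidef.diagonal (hpd f))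
  have hU' : ∀ s, (U' s).PosSemidef :=
    fun s => posSemidef_fromBlocks_diag (hU s) (PosSemidef.diagonal (hqd s))
  refine ⟨fun f => (T' f).submatrix e.symm e.symm, fun s => (U' s).submatrix e.symm e.symm, μ,
    fun f => (hT' f).submatrix _, fun s => (hU' s).submatrix _, hμ, ?_⟩
  intro f s
  have htr : ((T' f).submatrix e.symm e.symm * (U' s).submatrix e.symm e.symm).trace
      = (T' f * U' s).trace := by
    rw [Matrix.submatrix_mul_equiv]
    exact Fintype.sum_equiv e.symm _ _ (fun i => rfl)
  rw [htr]
  have hblock : T' f * U' s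
      = fromBlocks (T f * U s) 0 0 (diagonal fun p => pd f p * qd s p) := by
    simp only [T', U', fromBlocks_multiply, Matrix.mul_zero, Matrix.zero_mul, add_zero,
      zero_add, diagonal_mul_diagonal]
  rw [hblock]
  have htr2 : (fromBlocks (T f * U s) 0 0 (diagonal fun p => pd f p * qd s p)).trace
      = (T f * U s).trace + ∑ p : Fin k × Fin 2, pd f p * qd s p := by
    simp [Matrix.trace, Fintype.sum_sum_type, Matrix.diag]
  have hsum : ∑ p : Fin k × Fin 2, pd f p * qd s p = ∑ i, (ε - a f i * b i s) := by
    rw [Fintype.sum_prod_type]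
    refine Finset.sum_congr rfl fun i _ => ?_
    rw [Fin.sum_univ_two]
    have h0 : pd f (i, 0) = 1 + a f i := by simp [pd]
    have h1 : pd f (i, 1) = 1 - a f i := by simp [pd]
    have h2 : qd s (i, 0) = (ε - b i s) / 2 := by simp [qd]
    have h3 : qd s (i, 1) = (ε + b i s) / 2 := by simp [qd]
    rw [h0, h1, h2, h3]
    ring
  rw [htr2, hsum]
  dsimp only
  rw [hTU f s]
  ring

/-- Main auxiliary step: rounding, for an arbitrary factorization size. -/
lemma sdp_round_aux {F S : Type*} [Fintype F] [Fintype S]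
    (M Mt : Matrix F S ℝ) (k : ℕ) (hk : k = (Mt - M).rank)
    (ε : ℝ) (hε : ε = ⨆ f, ⨆ s, |Mt f s - M f s|) (d : ℕ)
    (hfact : IsSDPFactorization (fun f s => Mt f s) d) :
    IsSDPFactorization (fun f s => M f s + (k : ℝ) * ε) (d + 2 * k) := by
  have hEb : ∀ f s, |(Mt - M) f s| ≤ ε := by
    intro f s
    have h1 : |Mt f s - M f s| ≤ ⨆ s', |Mt f s' - M f s'| :=
      le_ciSup (f := fun s' => |Mt f s' - M f s'|)
        (Set.Finite.bddAbove (Set.finite_range _)) s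
    have h2 : (⨆ s', |Mt f s' - M f s'|) ≤ ⨆ f', ⨆ s', |Mt f' s' - M f' s'| :=
      le_ciSup (f := fun f' => ⨆ s', |Mt f' s' - M f' s'|)
        (Set.Finite.bddAbove (Set.finite_range _)) f
    rw [hε]
    simpa [Matrix.sub_apply] using h1.trans h2
  obtain ⟨a, b, ha, hb, hdec⟩ := exists_bounded_decomp (Mt - M) k hk.symm ε hEb
  have h := isSDPFactorization_add_correction (fun f s => Mt f s) d k ε a b ha hb hfact
  have heq : (fun f s => M f s + (k : ℝ) * ε)
      = (fun f s => Mt f s + ∑ i, (ε - a f i * b i s)) := by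
    funext f s
    have hd := hdec f s
    simp only [Matrix.sub_apply] at hd
    have hs : ∑ i : Fin k, (ε - a f i * b i s) = (k : ℝ) * ε - (Mt f s - M f s) := by
      rw [Finset.sum_sub_distrib, ← hd, Finset.sum_const, Finset.card_univ, Fintype.card_fin,
        nsmul_eq_mul]
    rw [hs]
    ring
  rw [heq]
  exact h

end Aux

/-- Rounding a matrix approximation to a problem approximation, SDP case: if `M̃` is
nonnegative with a size-`d` SDP factorization, `k = rank(M̃ − M)` and
`ε = ‖M̃ − M‖_∞`, then `M + kε·J` (with `J` the all-ones matrix) admits a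
size-`(d + 2k)` SDP factorization; in particular
`rank_SDP (M + kε·J) ≤ rank_SDP M̃ + 2·rank(M̃ − M)`. -/
theorem sdp_rounding {F S : Type*} [Fintype F] [Fintype S]
    (M Mt : Matrix F S ℝ)
    (hM : ∀ f s, 0 ≤ M f s) (hMt : ∀ f s, 0 ≤ Mt f s)
    (k : ℕ) (hk : k = (Mt - M).rank)
    (ε : ℝ) (hε : ε = ⨆ f, ⨆ s, |Mt f s - M f s|)
    (d : ℕ) (hfact : IsSDPFactorization (fun f s => Mt f s) d) :
    IsSDPFactorization (fun f s => M f s + (k : ℝ) * ε) (d + 2 * k) ∧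
    sdpRank (fun f s => M f s + (k : ℝ) * ε) ≤ sdpRank (fun f s => Mt f s) + 2 * k := by
  constructor
  · exact sdp_round_aux M Mt k hk ε hε d hfact
  · have hne : {d' | IsSDPFactorization (fun f s => Mt f s) d'}.Nonempty := ⟨d, hfact⟩
    have hmem : IsSDPFactorization (fun f s => Mt f s)
        (sInf {d' | IsSDPFactorization (fun f s => Mt f s) d'}) := Nat.sInf_mem hne
    have h2 := sdp_round_aux M Mt k hk ε hε _ hmem
    exact Nat.sInf_le h2
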